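/- The dual cone of the extended second order cone L equals M, i.e., M = {(y,v) : ⟨x,y⟩ + ⟨u,v⟩ ≥ 0 for all (x,u) ∈ L}. -/

import Mathlib

open RealInnerProductSpace

theorem dual_of_extended_second_order_cone
    (p q : ℕ) (hp : 0 < p) (hq : 0 < q)
    (L M : Set (EuclideanSpace ℝ (Fin p) × EuclideanSpace ℝ (Fin q)))
    (hL : L = {xu | ∀ i : Fin p, ‖xu.2‖ ≤ xu.1 i})
    (hM : M = {yv | ‖yv.2‖ ≤ ∑ i : Fin p, yv.1 i ∧ ∀ i : Fin p, 0 ≤ yv.1 i}) :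
    M = {yv | ∀ xu ∈ L, 0 ≤ ⟪xu.1, yv.1⟫ + ⟪xu.2, yv.2⟫} := by
  subst hL hM
  ext ⟨y, v⟩
  simp only [Set.mem_setOf_eq]
  constructor
  · rintro ⟨hnorm, hy⟩ ⟨x, u⟩ hxu
    simp only [Set.mem_setOf_eq] at hxu ⊢
    have h1 : ∑ i, ‖u‖ * y i ≤ ⟪x, y⟫ := by
      rw [PiLp.inner_apply]
      apply Finset.sum_le_sum
      intro i _
      simp only [RCLike.inner_apply, conj_trivial]
      exact (mul_le_mul_of_nonneg_right (hxu i) (hy i)).trans_eq (mul_comm _ _)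
    have h2 : -⟪u, v⟫ ≤ ‖u‖ * ‖v‖ := by
      have := abs_real_inner_le_norm u v
      have := neg_abs_le (⟪u, v⟫ : ℝ)
      linarith
    have h3 : ‖u‖ * ‖v‖ ≤ ‖u‖ * ∑ i, y i :=
      mul_le_mul_of_nonneg_left hnorm (norm_nonneg u)
    have h4 : ‖u‖ * ∑ i, y i = ∑ i, ‖u‖ * y i := Finset.mul_sum _ _ _
    linarith
  · intro h
    have hy : ∀ i, 0 ≤ y i := by
      intro i
      have hm : (EuclideanSpace.single i (1:ℝ), (0 : EuclideanSpace ℝ (Fin q)))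
          ∈ {xu : EuclideanSpace ℝ (Fin p) × EuclideanSpace ℝ (Fin q) |
              ∀ j : Fin p, ‖xu.2‖ ≤ xu.1 j} := by
        intro j
        simp only [norm_zero, EuclideanSpace.single_apply]
        split <;> norm_num
      have := h _ hm
      simpa [EuclideanSpace.inner_single_left] using this
    refine ⟨?_, hy⟩
    have hsum : (0:ℝ) ≤ ∑ i, y i := Finset.sum_nonneg fun i _ => hy i
    rcases eq_or_ne v 0 with hv | hv
    · simp [hv, hsum]
    · have hvpos : 0 < ‖v‖ := norm_pos_iff.mpr hv
      set x : EuclideanSpace ℝ (Fin p) := WithLp.toLp 2 (fun _ => ‖v‖) with hx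
      have hm : (x, -v) ∈ {xu : EuclideanSpace ℝ (Fin p) × EuclideanSpace ℝ (Fin q) |
          ∀ j : Fin p, ‖xu.2‖ ≤ xu.1 j} := by
        intro j
        simp [hx]
      have key := h _ hm
      simp only [Set.mem_setOf_eq] at key
      have hxy : ⟪x, y⟫ = ‖v‖ * ∑ i, y i := by
        rw [PiLp.inner_apply, Finset.mul_sum]
        refine Finset.sum_congr rfl fun i _ => ?_
        simp [hx, mul_comm]
      have huv : ⟪(-v : EuclideanSpace ℝ (Fin q)), v⟫ = -(‖v‖ * ‖v‖) := by
        rw [inner_neg_left, real_inner_self_eq_norm_mul_norm]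
      rw [hxy, huv] at key
      have : ‖v‖ * ‖v‖ ≤ ‖v‖ * ∑ i, y i := by linarith
      exact le_of_mul_le_mul_left this hvpos
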